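/- arXiv:2009.14140 — 2 statements merged into one kernel-verified Lean document; each statement's English description precedes it below -/
import Mathlib

section
/- There exists a constant c > 0 such that for every integer p ≥ 1 and every real polynomial q in one variable of degree at most p, there exists a twice continuously differentiable function v : ℝ² → ℝ satisfying: (i) v(x,0) = x(1 − x)·q(x) for all x ∈ [0,1]; (ii) (∫_T v²)^{1/2} + p^{−2}·(∫_T ((∂_x v)² + (∂_y v)²))^{1/2} + p^{−4}·(∫_T ((∂_{xx} v)² + 2(∂_{xy} v)² + (∂_{yy} v)²))^{1/2} ≤ c · p^{−1} · (∫_0^1 q(x)² dx)^{1/2}; where T = {(x,y) ∈ ℝ² : x ≥ 0, y ≥ 0, x + y ≤ 1}. -/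
open MeasureTheory

/-- The reference triangle `T = {(x,y) : x ≥ 0, y ≥ 0, x + y ≤ 1}`. -/
def refTriangle : Set (ℝ × ℝ) := {z | 0 ≤ z.1 ∧ 0 ≤ z.2 ∧ z.1 + z.2 ≤ 1}

/-- Partial derivative in the `x` direction. -/
noncomputable def dx (v : ℝ × ℝ → ℝ) (z : ℝ × ℝ) : ℝ := fderiv ℝ v z (1, 0)

/-- Partial derivative in the `y` direction. -/
noncomputable def dy (v : ℝ × ℝ → ℝ) (z : ℝ × ℝ) : ℝ := fderiv ℝ v z (0, 1)

namespace ExtAux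

open Polynomial

/-- interval integral of a polynomial on [0,1] -/
noncomputable def J (f : ℝ[X]) : ℝ := ∫ x in (0:ℝ)..1, f.eval x

lemma intInt (f : ℝ[X]) : IntervalIntegrable (fun x => f.eval x) volume 0 1 :=
  f.continuous.intervalIntegrable _ _

lemma J_add (f g : ℝ[X]) : J (f + g) = J f + J g := by
  unfold J
  simp only [eval_add]
  exact intervalIntegral.integral_add (intInt f) (intInt g)

lemma J_C_mul (a : ℝ) (f : ℝ[X]) : J (C a * f) = a * J f := by
  unfold J
  simp only [eval_mul, eval_C]
  exact intervalIntegral.integral_const_mul a _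

lemma J_zero : J 0 = 0 := by simp [J]

lemma J_nonneg {f : ℝ[X]} (h : ∀ x, 0 ≤ f.eval x) : 0 ≤ J f := by
  unfold J
  apply intervalIntegral.integral_nonneg (by norm_num)
  intro x _; exact h x

lemma J_sq_nonneg (f : ℝ[X]) : 0 ≤ J (f * f) :=
  J_nonneg (fun x => by simp only [eval_mul]; exact mul_self_nonneg _)

lemma J_ibp (f g : ℝ[X]) :
    J (derivative f * g) =
      f.eval 1 * g.eval 1 - f.eval 0 * g.eval 0 - J (f * derivative g) := by
  have h := intervalIntegral.integral_deriv_mul_eq_sub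
    (u := fun x => f.eval x) (v := fun x => g.eval x)
    (u' := fun x => (derivative f).eval x) (v' := fun x => (derivative g).eval x)
    (fun x _ => f.hasDerivAt x) (fun x _ => g.hasDerivAt x) (intInt _) (intInt _)
  have h2 : J (derivative f * g) + J (f * derivative g)
      = f.eval 1 * g.eval 1 - f.eval 0 * g.eval 0 := by
    rw [← h]
    unfold J
    rw [← intervalIntegral.integral_add (intInt _) (intInt _)]
    simp only [eval_mul]
  linarith


lemma dvd_derivative {a : ℝ} {m : ℕ} {f : ℝ[X]} (h : (X - C a) ^ (m + 1) ∣ f) :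
    (X - C a) ^ m ∣ derivative f := by
  obtain ⟨g, rfl⟩ := h
  rw [derivative_mul, derivative_pow, derivative_X_sub_C, mul_one, Nat.add_sub_cancel]
  exact dvd_add (((pow_dvd_pow _ le_rfl).mul_left _).mul_right _)
    ((pow_dvd_pow _ (Nat.le_succ m)).mul_right _)

lemma pow_dvd_iterate {a : ℝ} {k : ℕ} {f : ℝ[X]} (h : (X - C a) ^ k ∣ f) (m : ℕ) :
    (X - C a) ^ (k - m) ∣ derivative^[m] f := by
  induction m with
  | zero => simpa using h
  | succ m ih =>
    rw [Function.iterate_succ_apply']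
    rcases le_or_gt (k - m) 0 with h0 | h0
    · have : k - (m+1) = 0 := by omega
      simp [this]
    · have hkm : k - m = (k - (m + 1)) + 1 := by omega
      rw [hkm] at ih
      exact dvd_derivative ih

lemma eval_iterate_deriv_eq_zero {a : ℝ} {k m : ℕ} {f : ℝ[X]}
    (h : (X - C a) ^ k ∣ f) (hm : m < k) : (derivative^[m] f).eval a = 0 := by
  have hd := pow_dvd_iterate h m
  have h1 : (X - C a) ∣ derivative^[m] f := by
    refine dvd_trans ?_ hd
    calc (X - C a) = (X - C a) ^ 1 := (pow_one _).symm
    _ ∣ (X - C a) ^ (k - m) := pow_dvd_pow _ (by omega)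
  obtain ⟨g, hg⟩ := h1
  simp [hg]

lemma eval_iterate_deriv_mul (k j : ℕ) (a : ℝ) (g : ℝ[X]) :
    (derivative^[k + j] ((X - C a) ^ k * g)).eval a =
      ((k + j).choose j : ℝ) * (k.factorial : ℝ) * (derivative^[j] g).eval a := by
  rw [Polynomial.iterate_derivative_mul, eval_finset_sum]
  rw [Finset.sum_eq_single j]
  · rw [Nat.add_sub_cancel, Polynomial.iterate_derivative_X_sub_pow_self]
    simp [nsmul_eq_mul, eval_mul, eval_natCast]
    ring
  · intro i hi hij
    rw [Finset.mem_range] at hi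
    rw [Polynomial.iterate_derivative_X_sub_pow]
    rcases Nat.lt_or_ge i j with hlt | hge
    · have : k.descFactorial (k + j - i) = 0 := by
        rw [Nat.descFactorial_eq_zero_iff_lt]; omega
      simp [this]
    · have : eval a ((X - C a) ^ (k - (k + j - i))) = 0 := by
        rw [eval_pow]; simp [zero_pow (by omega : k - (k + j - i) ≠ 0)]
      simp [nsmul_eq_mul, eval_mul, eval_natCast, this]
  · intro h; exfalso; exact h (Finset.mem_range.mpr (by omega))


noncomputable def B (k : ℕ) : ℝ[X] := (X * (1 - X)) ^ k
noncomputable def P (k : ℕ) : ℝ[X] := derivative^[k] (B k)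

lemma B_form0 (k : ℕ) : B k = (X - C 0) ^ k * (1 - X) ^ k := by
  unfold B; rw [C_0, sub_zero, mul_pow]

lemma B_form1 (k : ℕ) : B k = (X - C 1) ^ k * ((-1 : ℝ[X]) ^ k * X ^ k) := by
  unfold B
  rw [← mul_pow, ← mul_pow]
  congr 1
  rw [C_1]
  ring

lemma one_sub_X_ne : (1 - X : ℝ[X]) ≠ 0 := by
  intro h
  have := congrArg (eval 0) h
  simp at this

lemma natDegree_one_sub_X : ((1 : ℝ[X]) - X).natDegree = 1 := by
  have : (1 : ℝ[X]) - X = -(X - C 1) := by rw [C_1]; ring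
  rw [this, natDegree_neg, natDegree_X_sub_C]

lemma natDegree_base : ((X : ℝ[X]) * (1 - X)).natDegree = 2 := by
  rw [natDegree_mul X_ne_zero one_sub_X_ne, natDegree_X, natDegree_one_sub_X]

lemma leadingCoeff_base : ((X : ℝ[X]) * (1 - X)).leadingCoeff = -1 := by
  have h1 : ((1 : ℝ[X]) - X) = -(X - C 1) := by rw [C_1]; ring
  rw [leadingCoeff_mul, leadingCoeff_X, one_mul, h1, leadingCoeff_neg,
    (monic_X_sub_C (1:ℝ)).leadingCoeff]

lemma natDegree_B (k : ℕ) : (B k).natDegree = 2 * k := by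
  unfold B; rw [natDegree_pow, natDegree_base, mul_comm]

lemma coeff_B (k : ℕ) : (B k).coeff (2 * k) = (-1) ^ k := by
  have h := natDegree_B k
  have h2 : (B k).coeff (2 * k) = (B k).leadingCoeff := by rw [leadingCoeff, h]
  rw [h2]
  unfold B
  rw [leadingCoeff_pow, leadingCoeff_base]

lemma natDegree_P_le (k : ℕ) : (P k).natDegree ≤ k := by
  unfold P
  have := natDegree_iterate_derivative (B k) k
  rw [natDegree_B] at this
  omega

lemma coeff_P (k : ℕ) : (P k).coeff k = ((2 * k).descFactorial k : ℝ) * (-1) ^ k := by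
  unfold P
  rw [coeff_iterate_derivative, show k + k = 2 * k by ring, coeff_B, nsmul_eq_mul]

lemma coeff_P_ne_zero (k : ℕ) : (P k).coeff k ≠ 0 := by
  rw [coeff_P]
  apply mul_ne_zero
  · have : (2*k).descFactorial k ≠ 0 := by
      intro h
      rw [Nat.descFactorial_eq_zero_iff_lt] at h
      omega
    exact_mod_cast this
  · apply pow_ne_zero; norm_num

lemma eval_deriv_B_zero {k m : ℕ} (hm : m < k) : (derivative^[m] (B k)).eval 0 = 0 := by
  apply eval_iterate_deriv_eq_zero (k := k) _ hm
  rw [B_form0 k]; exact dvd_mul_right _ _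

lemma eval_deriv_B_one {k m : ℕ} (hm : m < k) : (derivative^[m] (B k)).eval 1 = 0 := by
  apply eval_iterate_deriv_eq_zero (k := k) _ hm
  rw [B_form1 k]; exact dvd_mul_right _ _

lemma P_eval_zero (k : ℕ) : (P k).eval 0 = (k.factorial : ℝ) := by
  have h := eval_iterate_deriv_mul k 0 0 ((1 - X) ^ k)
  simp only [Nat.add_zero, Nat.choose_zero_right, Function.iterate_zero_apply,
    Nat.cast_one, one_mul] at h
  unfold P
  rw [B_form0 k, h]
  simp

lemma P_eval_one (k : ℕ) : (P k).eval 1 = (-1) ^ k * (k.factorial : ℝ) := by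
  have h := eval_iterate_deriv_mul k 0 1 ((-1 : ℝ[X]) ^ k * X ^ k)
  simp only [Nat.add_zero, Nat.choose_zero_right, Function.iterate_zero_apply,
    Nat.cast_one, one_mul] at h
  unfold P
  rw [B_form1 k, h]
  simp [mul_comm]

lemma dP_eval_zero (k : ℕ) :
    (derivative (P k)).eval 0 = -((k : ℝ) * ((k : ℝ) + 1) * (k.factorial : ℝ)) := by
  have h := eval_iterate_deriv_mul k 1 0 ((1 - X) ^ k)
  have hP : derivative (P k) = derivative^[k + 1] (B k) := by
    unfold P; rw [Function.iterate_succ_apply']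
  rw [hP, B_form0 k, h]
  have hg : (derivative^[1] ((1 - X : ℝ[X]) ^ k)).eval 0 = -(k : ℝ) := by
    simp [derivative_pow]
  rw [hg, Nat.choose_one_right]
  push_cast
  ring

lemma dP_eval_one (k : ℕ) :
    (derivative (P k)).eval 1 = (-1) ^ k * ((k : ℝ) * ((k : ℝ) + 1) * (k.factorial : ℝ)) := by
  have h := eval_iterate_deriv_mul k 1 1 ((-1 : ℝ[X]) ^ k * X ^ k)
  have hP : derivative (P k) = derivative^[k + 1] (B k) := by
    unfold P; rw [Function.iterate_succ_apply']
  rw [hP, B_form1 k, h]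
  have hg : (derivative^[1] ((-1 : ℝ[X]) ^ k * X ^ k)).eval 1 = (-1 : ℝ) ^ k * (k : ℝ) := by
    simp [derivative_pow]
  rw [hg, Nat.choose_one_right]
  push_cast
  ring

lemma J_iterate (k : ℕ) : ∀ m, m ≤ k → ∀ f : ℝ[X],
    J (f * derivative^[m] (B k)) = (-1) ^ m * J (derivative^[m] f * B k) := by
  intro m
  induction m with
  | zero => intro _ f; simp
  | succ m ih =>
    intro hm f
    have hmk : m < k := by omega
    rw [Function.iterate_succ_apply']
    have hibp := J_ibp (derivative^[m] (B k)) f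
    rw [eval_deriv_B_zero hmk, eval_deriv_B_one hmk] at hibp
    simp only [zero_mul, sub_zero, zero_sub] at hibp
    have hcomm : J (f * derivative (derivative^[m] (B k)))
        = J (derivative (derivative^[m] (B k)) * f) := by rw [mul_comm]
    rw [hcomm, hibp, mul_comm (derivative^[m] (B k)) (derivative f),
      ih (by omega) (derivative f), ← Function.iterate_succ_apply derivative m f]
    rw [Function.iterate_succ_apply]
    ring

lemma J_orth {f : ℝ[X]} {k : ℕ} (h : f.natDegree < k) : J (f * P k) = 0 := by
  unfold P
  rw [J_iterate k k le_rfl f, Polynomial.iterate_derivative_eq_zero h, zero_mul, J_zero,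
    mul_zero]

lemma beta_nat (b a : ℕ) : ∫ x in (0:ℝ)..1, x ^ a * (1 - x) ^ b
    = (a.factorial * b.factorial : ℝ) / ((a + b + 1).factorial : ℝ) := by
  induction b generalizing a with
  | zero =>
    simp only [pow_zero, mul_one, integral_pow]
    rw [Nat.factorial_succ]
    push_cast
    rw [Nat.add_zero]
    field_simp
    simp
  | succ b ih =>
    have hu : ∀ x ∈ Set.uIcc (0:ℝ) 1, HasDerivAt (fun x : ℝ => x ^ (a+1))
        (((a:ℝ)+1) * x ^ a) x := by
      intro x _
      have := hasDerivAt_pow (a+1) x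
      simpa using this
    have hv : ∀ x ∈ Set.uIcc (0:ℝ) 1, HasDerivAt (fun x : ℝ => (1-x) ^ (b+1))
        (-(((b:ℝ)+1) * (1-x) ^ b)) x := by
      intro x _
      have h1 : HasDerivAt (fun x : ℝ => 1 - x) (-1) x := by
        simpa using (hasDerivAt_id x).const_sub 1
      have := h1.fun_pow (b+1)
      simpa [mul_comm] using this
    have hiu : IntervalIntegrable (fun x : ℝ => ((a:ℝ)+1) * x ^ a) volume 0 1 :=
      (by continuity : Continuous fun x : ℝ => ((a:ℝ)+1) * x ^ a).intervalIntegrable _ _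
    have hiv : IntervalIntegrable (fun x : ℝ => -(((b:ℝ)+1) * (1-x) ^ b)) volume 0 1 :=
      (by continuity : Continuous fun x : ℝ => -(((b:ℝ)+1) * (1-x) ^ b)).intervalIntegrable _ _
    have h := intervalIntegral.integral_deriv_mul_eq_sub hu hv hiu hiv
    simp only [one_pow, sub_self, zero_pow (Nat.succ_ne_zero b), zero_pow (Nat.succ_ne_zero a),
      sub_zero, one_mul, mul_one, zero_mul, mul_zero] at h
    -- h : ∫ (a+1) x^a (1-x)^{b+1} + x^{a+1}·(-(b+1)(1-x)^b) = 0 - 0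
    have hsplit : (∫ x in (0:ℝ)..1, (((a:ℝ)+1) * x ^ a * (1-x)^(b+1) +
        x^(a+1) * (-(((b:ℝ)+1) * (1-x) ^ b))))
        = ((a:ℝ)+1) * (∫ x in (0:ℝ)..1, x ^ a * (1-x)^(b+1))
          - ((b:ℝ)+1) * (∫ x in (0:ℝ)..1, x ^ (a+1) * (1-x)^b) := by
      rw [intervalIntegral.integral_add
        ((by continuity : Continuous fun x : ℝ => ((a:ℝ)+1) * x ^ a * (1-x)^(b+1)).intervalIntegrable _ _)
        ((by continuity : Continuous fun x : ℝ => x^(a+1) * (-(((b:ℝ)+1) * (1-x) ^ b))).intervalIntegrable _ _)]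
      rw [show (fun x : ℝ => ((a:ℝ)+1) * x ^ a * (1-x)^(b+1))
          = fun x : ℝ => ((a:ℝ)+1) * (x ^ a * (1-x)^(b+1)) by funext x; ring]
      rw [show (fun x : ℝ => x^(a+1) * (-(((b:ℝ)+1) * (1-x) ^ b)))
          = fun x : ℝ => (-((b:ℝ)+1)) * (x ^ (a+1) * (1-x)^b) by funext x; ring]
      rw [intervalIntegral.integral_const_mul, intervalIntegral.integral_const_mul]
      ring
    rw [h] at hsplit
    norm_num at hsplit
    have hrec := ih (a+1)
    rw [show a + 1 + b + 1 = a + (b + 1) + 1 by ring] at hrec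
    have ha : ((a:ℝ)+1) ≠ 0 := by positivity
    have hgoal : (∫ x in (0:ℝ)..1, x ^ a * (1-x)^(b+1))
        = (((b:ℝ)+1) / ((a:ℝ)+1)) * (∫ x in (0:ℝ)..1, x ^ (a+1) * (1-x)^b) := by
      field_simp
      linarith [hsplit]
    rw [hgoal, hrec]
    have hfa : ((a+1).factorial : ℝ) = ((a:ℝ)+1) * (a.factorial : ℝ) := by
      rw [Nat.factorial_succ]; push_cast; ring
    have hfb : (((b+1)).factorial : ℝ) = ((b:ℝ)+1) * (b.factorial : ℝ) := by
      rw [Nat.factorial_succ]; push_cast; ring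
    rw [hfa, hfb]
    have hf : ((a + (b+1) + 1).factorial : ℝ) ≠ 0 :=
      Nat.cast_ne_zero.mpr (Nat.factorial_ne_zero _)
    generalize ((a + (b+1) + 1).factorial : ℝ) = F at hf ⊢
    generalize (a.factorial : ℝ) = A
    generalize (b.factorial : ℝ) = Bb
    rw [div_mul_eq_mul_div, mul_div_assoc', eq_div_iff hf, div_mul_eq_mul_div,
      div_mul_eq_mul_div, div_eq_iff ha]
    have hFF : F * F⁻¹ = 1 := mul_inv_cancel₀ hf
    ring_nf
    rw [mul_assoc _ F F⁻¹, hFF, mul_assoc _ F F⁻¹, hFF, mul_assoc _ F F⁻¹, hFF,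
      mul_assoc _ F F⁻¹, hFF]
    ring

lemma J_B (k : ℕ) : J (B k)
    = (k.factorial : ℝ) * (k.factorial : ℝ) / ((2 * k + 1).factorial : ℝ) := by
  have h : J (B k) = ∫ x in (0:ℝ)..1, x ^ k * (1 - x) ^ k := by
    unfold J B
    apply intervalIntegral.integral_congr
    intro x _
    simp [mul_pow]
  rw [h, beta_nat k k]
  norm_num [two_mul]

lemma iterate_deriv_B_top (k : ℕ) :
    derivative^[2 * k] (B k) = C (((2 * k).factorial : ℝ) * (-1) ^ k) := by
  have hdeg : (derivative^[2 * k] (B k)).natDegree = 0 := by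
    have := natDegree_iterate_derivative (B k) (2 * k)
    rw [natDegree_B] at this
    omega
  have heq := Polynomial.eq_C_of_natDegree_le_zero (le_of_eq hdeg)
  rw [heq, coeff_iterate_derivative]
  simp only [zero_add, Nat.descFactorial_self, coeff_B, nsmul_eq_mul]

lemma J_P_sq (k : ℕ) :
    J (P k * P k) = (k.factorial : ℝ) ^ 2 / (2 * (k : ℝ) + 1) := by
  have h1 : J (P k * P k) = (-1) ^ k * J (derivative^[k] (P k) * B k) := by
    conv_lhs => rw [show P k * P k = P k * derivative^[k] (B k) from rfl]
    exact J_iterate k k le_rfl (P k)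
  have h2 : derivative^[k] (P k) = derivative^[2 * k] (B k) := by
    unfold P
    rw [← Function.iterate_add_apply]
    norm_num [two_mul]
  rw [h1, h2, iterate_deriv_B_top, J_C_mul, J_B]
  have hfac : ((2 * k + 1).factorial : ℝ) = (2 * (k:ℝ) + 1) * ((2 * k).factorial : ℝ) := by
    rw [Nat.factorial_succ]; push_cast; ring
  rw [hfac]
  have h3 : ((-1:ℝ)) ^ k * (-1:ℝ) ^ k = 1 := by
    rw [← pow_add, ← two_mul, pow_mul]; norm_num
  have hf : ((2*k).factorial : ℝ) ≠ 0 := Nat.cast_ne_zero.mpr (Nat.factorial_ne_zero _)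
  have hden : (2 * (k:ℝ) + 1) ≠ 0 := by positivity
  field_simp
  linear_combination h3

lemma J_dP_sq (k : ℕ) :
    J (derivative (P k) * derivative (P k))
      = 2 * (k : ℝ) * ((k : ℝ) + 1) * (k.factorial : ℝ) ^ 2 := by
  rcases Nat.eq_zero_or_pos k with rfl | hk
  · have : P 0 = 1 := by unfold P B; simp
    rw [this]
    simp [J_zero]
  · have horth : J (P k * derivative (derivative (P k))) = 0 := by
      rw [mul_comm]
      apply J_orth
      have h1 : (P k).natDegree ≤ k := natDegree_P_le k
      have h2 := natDegree_derivative_le (P k)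
      have h3 := natDegree_derivative_le (derivative (P k))
      omega
    have hibp := J_ibp (P k) (derivative (P k))
    rw [horth, P_eval_one, P_eval_zero, dP_eval_one, dP_eval_zero] at hibp
    have h3 : ((-1:ℝ)) ^ k * (-1:ℝ) ^ k = 1 := by
      rw [← pow_add, ← two_mul, pow_mul]; norm_num
    rw [hibp]
    linear_combination ((k:ℝ) * ((k:ℝ)+1) * (k.factorial:ℝ)^2) * h3

lemma P_zero_eq : P 0 = 1 := by unfold P B; simp

lemma expand (n : ℕ) : ∀ r : ℝ[X], r.natDegree ≤ n →
    ∃ a : ℕ → ℝ, r = ∑ k ∈ Finset.range (n + 1), C (a k) * P k := by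
  induction n with
  | zero =>
    intro r hr
    refine ⟨fun _ => r.coeff 0, ?_⟩
    rw [Finset.range_one, Finset.sum_singleton, P_zero_eq, mul_one]
    exact Polynomial.eq_C_of_natDegree_le_zero hr
  | succ n ih =>
    intro r hr
    set t := r.coeff (n + 1) / (P (n + 1)).coeff (n + 1) with ht
    set r' := r - C t * P (n + 1) with hr'
    have hdeg : r'.natDegree ≤ n := by
      rw [Polynomial.natDegree_le_iff_coeff_eq_zero]
      intro N hN
      rw [hr', coeff_sub, coeff_C_mul]
      rcases eq_or_lt_of_le (Nat.succ_le_of_lt hN) with hNe | hNl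
      · rw [← hNe, ht, div_mul_cancel₀ _ (coeff_P_ne_zero (n + 1)), sub_self]
      · rw [coeff_eq_zero_of_natDegree_lt (lt_of_le_of_lt hr hNl),
          coeff_eq_zero_of_natDegree_lt (lt_of_le_of_lt (natDegree_P_le (n + 1)) hNl)]
        simp
    obtain ⟨a, ha⟩ := ih r' hdeg
    refine ⟨Function.update a (n + 1) t, ?_⟩
    have hsum : (∑ k ∈ Finset.range (n + 1), C (Function.update a (n + 1) t k) * P k)
        = ∑ k ∈ Finset.range (n + 1), C (a k) * P k := by
      apply Finset.sum_congr rfl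
      intro k hk
      rw [Finset.mem_range] at hk
      rw [Function.update_of_ne (by omega)]
    rw [Finset.sum_range_succ, hsum, Function.update_self, ← ha, hr']
    ring

lemma J_sum {ι : Type*} (s : Finset ι) (f : ι → ℝ[X]) :
    J (∑ i ∈ s, f i) = ∑ i ∈ s, J (f i) := by
  unfold J
  simp only [eval_finset_sum]
  rw [intervalIntegral.integral_finset_sum]
  intro i _
  exact intInt _

lemma J_bilinear (n : ℕ) (a : ℕ → ℝ) (Q : ℕ → ℝ[X]) :
    J ((∑ k ∈ Finset.range n, C (a k) * Q k) * (∑ k ∈ Finset.range n, C (a k) * Q k))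
      = ∑ j ∈ Finset.range n, ∑ k ∈ Finset.range n, a j * a k * J (Q j * Q k) := by
  rw [Finset.sum_mul_sum, J_sum]
  apply Finset.sum_congr rfl
  intro j _
  rw [J_sum]
  apply Finset.sum_congr rfl
  intro k _
  have hC : C (a j) * Q j * (C (a k) * Q k) = C (a j * a k) * (Q j * Q k) := by
    rw [map_mul]
    ring
  rw [hC, J_C_mul]

lemma J_P_offdiag {j k : ℕ} (h : j ≠ k) : J (P j * P k) = 0 := by
  rcases Nat.lt_or_ge j k with hlt | hge
  · exact J_orth (lt_of_le_of_lt (natDegree_P_le j) hlt)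
  · rw [mul_comm]
    exact J_orth (lt_of_le_of_lt (natDegree_P_le k) (by omega))

lemma J_parseval (n : ℕ) (a : ℕ → ℝ) :
    J ((∑ k ∈ Finset.range (n + 1), C (a k) * P k)
        * (∑ k ∈ Finset.range (n + 1), C (a k) * P k))
      = ∑ k ∈ Finset.range (n + 1), (a k) ^ 2 * ((k.factorial : ℝ) ^ 2 / (2 * (k:ℝ) + 1)) := by
  rw [J_bilinear]
  apply Finset.sum_congr rfl
  intro j hj
  rw [Finset.sum_eq_single j]
  · rw [J_P_sq]; ring
  · intro k _ hkj
    rw [J_P_offdiag (Ne.symm hkj), mul_zero]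
  · intro h; exact absurd hj h

lemma J_cs (f g : ℝ[X]) : J (f * g) ^ 2 ≤ J (f * f) * J (g * g) := by
  have key : ∀ t : ℝ, 0 ≤ J (f * f) - 2 * t * J (f * g) + t ^ 2 * J (g * g) := by
    intro t
    have h0 : 0 ≤ J ((f - C t * g) * (f - C t * g)) := J_sq_nonneg _
    have hexp : (f - C t * g) * (f - C t * g)
        = f * f + (C (-(2 * t)) * (f * g) + C (t ^ 2) * (g * g)) := by
      have h1 : C (-(2 * t)) = -(2 * C t) := by
        rw [map_neg, map_mul, map_ofNat]
      have h2 : C (t ^ 2) = (C t) ^ 2 := by rw [map_pow]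
      rw [h1, h2]
      ring
    rw [hexp, J_add, J_add, J_C_mul, J_C_mul] at h0
    nlinarith [h0]
  rcases eq_or_lt_of_le (J_sq_nonneg g) with hg | hg
  · have hfg : J (f * g) = 0 := by
      by_contra hne
      have h1 := key ((J (f * f) + 1) / (2 * J (f * g)))
      rw [← hg] at h1
      have h2 : (J (f * f) + 1) / (2 * J (f * g)) * J (f * g) = (J (f * f) + 1) / 2 := by
        rw [div_mul_eq_mul_div, mul_comm (2:ℝ) (J (f * g)), ← div_div,
          mul_div_assoc, div_self hne, mul_one]
      nlinarith [h1, h2]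
    rw [hfg, ← hg]
    norm_num
  · have hgne : J (g * g) ≠ 0 := ne_of_gt hg
    have h1 := key (J (f * g) / J (g * g))
    have h2 : J (f * g) / J (g * g) * J (g * g) = J (f * g) := div_mul_cancel₀ _ hgne
    have h3 : (J (f * g) / J (g * g)) ^ 2 * J (g * g) = J (f * g) ^ 2 / J (g * g) := by
      field_simp
    rw [h3] at h1
    have h4 : J (f * g) ^ 2 / J (g * g) * J (g * g) = J (f * g) ^ 2 :=
      div_mul_cancel₀ _ hgne
    nlinarith [h1, hg, h4, h2]

lemma markov (n : ℕ) (hn : 1 ≤ n) (r : ℝ[X]) (hr : r.natDegree ≤ n) :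
    J (derivative r * derivative r) ≤ 24 * (n : ℝ) ^ 4 * J (r * r) := by
  obtain ⟨a, ha⟩ := expand n r hr
  set s : ℕ → ℝ := fun k => (k.factorial : ℝ) ^ 2 / (2 * (k:ℝ) + 1) with hs
  set w : ℕ → ℝ := fun k => Real.sqrt (2 * (k:ℝ) * ((k:ℝ) + 1)) * (k.factorial : ℝ) with hwdef
  have hw_nonneg : ∀ k, 0 ≤ w k := fun k => by positivity
  have hs_pos : ∀ k, 0 < s k := by
    intro k
    have : (0:ℝ) < (k.factorial : ℝ) := by exact_mod_cast Nat.factorial_pos k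
    rw [hs]
    positivity
  have hw : ∀ k, J (derivative (P k) * derivative (P k)) = (w k) ^ 2 := by
    intro k
    rw [J_dP_sq, hwdef]
    simp only []
    rw [mul_pow, Real.sq_sqrt (by positivity)]
  have hJd : derivative r = ∑ k ∈ Finset.range (n + 1), C (a k) * derivative (P k) := by
    rw [ha, derivative_sum]
    apply Finset.sum_congr rfl
    intro k _
    rw [derivative_mul, derivative_C, zero_mul, zero_add]
  have habsJ : ∀ j k, |J (derivative (P j) * derivative (P k))| ≤ w j * w k := by
    intro j k
    have h1 := J_cs (derivative (P j)) (derivative (P k))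
    rw [hw j, hw k] at h1
    have h2 : |J (derivative (P j) * derivative (P k))|
        = Real.sqrt (J (derivative (P j) * derivative (P k)) ^ 2) :=
      (Real.sqrt_sq_eq_abs _).symm
    rw [h2]
    calc Real.sqrt (J (derivative (P j) * derivative (P k)) ^ 2)
        ≤ Real.sqrt ((w j * w k) ^ 2) := Real.sqrt_le_sqrt (by nlinarith [h1])
      _ = |w j * w k| := Real.sqrt_sq_eq_abs _
      _ = w j * w k := abs_of_nonneg (by positivity)
  have hstep1 : J (derivative r * derivative r)
      ≤ (∑ k ∈ Finset.range (n + 1), |a k| * w k) ^ 2 := by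
    rw [hJd, J_bilinear, sq, Finset.sum_mul_sum]
    apply Finset.sum_le_sum
    intro j _
    apply Finset.sum_le_sum
    intro k _
    calc a j * a k * J (derivative (P j) * derivative (P k))
        ≤ |a j * a k * J (derivative (P j) * derivative (P k))| := le_abs_self _
      _ = |a j| * |a k| * |J (derivative (P j) * derivative (P k))| := by
          rw [abs_mul, abs_mul]
      _ ≤ |a j| * |a k| * (w j * w k) := by
          apply mul_le_mul_of_nonneg_left (habsJ j k) (by positivity)
      _ = |a j| * w j * (|a k| * w k) := by ring
  have hstep2 : (∑ k ∈ Finset.range (n + 1), |a k| * w k) ^ 2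
      ≤ (∑ k ∈ Finset.range (n + 1), (a k) ^ 2 * s k)
        * (∑ k ∈ Finset.range (n + 1), (w k) ^ 2 / s k) := by
    have hcs := Finset.sum_mul_sq_le_sq_mul_sq (Finset.range (n + 1))
      (fun k => |a k| * Real.sqrt (s k)) (fun k => w k / Real.sqrt (s k))
    have heq : ∀ k, |a k| * Real.sqrt (s k) * (w k / Real.sqrt (s k)) = |a k| * w k := by
      intro k
      have : Real.sqrt (s k) ≠ 0 := ne_of_gt (Real.sqrt_pos.mpr (hs_pos k))
      field_simp
    have heq2 : ∀ k, (|a k| * Real.sqrt (s k)) ^ 2 = (a k) ^ 2 * s k := by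
      intro k
      rw [mul_pow, sq_abs, Real.sq_sqrt (le_of_lt (hs_pos k))]
    have heq3 : ∀ k, (w k / Real.sqrt (s k)) ^ 2 = (w k) ^ 2 / s k := by
      intro k
      rw [div_pow, Real.sq_sqrt (le_of_lt (hs_pos k))]
    calc (∑ k ∈ Finset.range (n + 1), |a k| * w k) ^ 2
        = (∑ k ∈ Finset.range (n + 1),
            |a k| * Real.sqrt (s k) * (w k / Real.sqrt (s k))) ^ 2 := by
          congr 1
          exact (Finset.sum_congr rfl fun k _ => (heq k)).symm
      _ ≤ (∑ k ∈ Finset.range (n + 1), (|a k| * Real.sqrt (s k)) ^ 2)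
          * (∑ k ∈ Finset.range (n + 1), (w k / Real.sqrt (s k)) ^ 2) := hcs
      _ = (∑ k ∈ Finset.range (n + 1), (a k) ^ 2 * s k)
          * (∑ k ∈ Finset.range (n + 1), (w k) ^ 2 / s k) := by
          congr 1
          · exact Finset.sum_congr rfl fun k _ => heq2 k
          · exact Finset.sum_congr rfl fun k _ => heq3 k
  have hsum_s : (∑ k ∈ Finset.range (n + 1), (a k) ^ 2 * s k) = J (r * r) := by
    rw [ha, J_parseval]
  have hratio : ∀ k ∈ Finset.range (n + 1),
      (w k) ^ 2 / s k ≤ 2 * (n:ℝ) * ((n:ℝ) + 1) * (2 * (n:ℝ) + 1) := by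
    intro k hk
    rw [Finset.mem_range] at hk
    have hkn : (k : ℝ) ≤ (n : ℝ) := by exact_mod_cast (by omega : k ≤ n)
    have hfne : (k.factorial : ℝ) ≠ 0 := Nat.cast_ne_zero.mpr (Nat.factorial_ne_zero _)
    have hval : (w k) ^ 2 / s k = 2 * (k:ℝ) * ((k:ℝ) + 1) * (2 * (k:ℝ) + 1) := by
      rw [hwdef, hs]
      simp only []
      rw [mul_pow, Real.sq_sqrt (by positivity)]
      field_simp
    rw [hval]
    have hk0 : (0:ℝ) ≤ (k:ℝ) := Nat.cast_nonneg k
    gcongr <;> linarith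
  have hsum_ratio : (∑ k ∈ Finset.range (n + 1), (w k) ^ 2 / s k) ≤ 24 * (n:ℝ) ^ 4 := by
    calc (∑ k ∈ Finset.range (n + 1), (w k) ^ 2 / s k)
        ≤ ∑ _k ∈ Finset.range (n + 1), 2 * (n:ℝ) * ((n:ℝ) + 1) * (2 * (n:ℝ) + 1) :=
          Finset.sum_le_sum hratio
      _ = ((n:ℝ) + 1) * (2 * (n:ℝ) * ((n:ℝ) + 1) * (2 * (n:ℝ) + 1)) := by
          rw [Finset.sum_const, Finset.card_range]
          push_cast
          ring
      _ = (2 * (n:ℝ)) * (((n:ℝ) + 1) * ((n:ℝ) + 1)) * (2 * (n:ℝ) + 1) := by ring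
      _ ≤ (2 * (n:ℝ)) * (4 * (n:ℝ) ^ 2) * (3 * (n:ℝ)) := by
          have hn1 : (1:ℝ) ≤ (n:ℝ) := by exact_mod_cast hn
          have key : ((n:ℝ) + 1) * ((n:ℝ) + 1) ≤ 4 * (n:ℝ) ^ 2 := by nlinarith
          have h3 : 2 * (n:ℝ) + 1 ≤ 3 * (n:ℝ) := by linarith
          have h0 : (0:ℝ) ≤ 2 * (n:ℝ) := by linarith
          have h1 : (0:ℝ) ≤ ((n:ℝ) + 1) * ((n:ℝ) + 1) := by positivity
          nlinarith [mul_le_mul_of_nonneg_left key h0, mul_le_mul_of_nonneg_left h3 (by positivity : (0:ℝ) ≤ (2 * (n:ℝ)) * (4 * (n:ℝ) ^ 2))]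
      _ ≤ 24 * (n:ℝ) ^ 4 := le_of_eq (by ring)
  have hJrr : 0 ≤ J (r * r) := J_sq_nonneg r
  calc J (derivative r * derivative r)
      ≤ (∑ k ∈ Finset.range (n + 1), |a k| * w k) ^ 2 := hstep1
    _ ≤ (∑ k ∈ Finset.range (n + 1), (a k) ^ 2 * s k)
        * (∑ k ∈ Finset.range (n + 1), (w k) ^ 2 / s k) := hstep2
    _ = J (r * r) * (∑ k ∈ Finset.range (n + 1), (w k) ^ 2 / s k) := by rw [hsum_s]
    _ ≤ J (r * r) * (24 * (n:ℝ) ^ 4) := mul_le_mul_of_nonneg_left hsum_ratio hJrr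
    _ = 24 * (n:ℝ) ^ 4 * J (r * r) := by ring

lemma contDiff_eval (n : ℕ∞) (f : ℝ[X]) : ContDiff ℝ n (fun x : ℝ => f.eval x) := by
  induction f using Polynomial.induction_on' with
  | add p q hp hq => simpa [eval_add] using hp.add hq
  | monomial i a =>
    simp only [eval_monomial]
    exact contDiff_const.mul (contDiff_id.pow i)

noncomputable def vf (f : ℝ[X]) (c : ℝ) : ℝ × ℝ → ℝ :=
  fun z => f.eval z.1 * Real.exp (-c * z.2)

lemma vf_contDiff (n : ℕ∞) (f : ℝ[X]) (c : ℝ) : ContDiff ℝ n (vf f c) := by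
  apply ContDiff.mul
  · exact (contDiff_eval n f).comp contDiff_fst
  · exact Real.contDiff_exp.comp (contDiff_const.mul contDiff_snd)

lemma vf_hasFDerivAt (f : ℝ[X]) (c : ℝ) (z : ℝ × ℝ) :
    HasFDerivAt (vf f c)
      ((f.eval z.1) • ((Real.exp (-c * z.2) * -c) • ContinuousLinearMap.snd ℝ ℝ ℝ)
        + (Real.exp (-c * z.2)) • (((derivative f).eval z.1) • ContinuousLinearMap.fst ℝ ℝ ℝ))
      z := by
  have hF : HasFDerivAt (fun z : ℝ × ℝ => f.eval z.1)
      (((derivative f).eval z.1) • ContinuousLinearMap.fst ℝ ℝ ℝ) z :=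
    (f.hasDerivAt z.1).comp_hasFDerivAt z hasFDerivAt_fst
  have hlin : HasDerivAt (fun y : ℝ => -c * y) (-c) z.2 := by
    simpa using (hasDerivAt_id z.2).const_mul (-c)
  have hG1 : HasDerivAt (fun y : ℝ => Real.exp (-c * y)) (Real.exp (-c * z.2) * -c) z.2 :=
    (Real.hasDerivAt_exp (-c * z.2)).comp z.2 hlin
  have hG : HasFDerivAt (fun z : ℝ × ℝ => Real.exp (-c * z.2))
      ((Real.exp (-c * z.2) * -c) • ContinuousLinearMap.snd ℝ ℝ ℝ) z :=
    hG1.comp_hasFDerivAt z hasFDerivAt_snd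
  exact hF.mul hG

lemma dx_vf (f : ℝ[X]) (c : ℝ) : dx (vf f c) = vf (derivative f) c := by
  funext z
  unfold dx
  rw [(vf_hasFDerivAt f c z).fderiv]
  simp only [ContinuousLinearMap.add_apply, ContinuousLinearMap.smul_apply,
    ContinuousLinearMap.coe_fst', ContinuousLinearMap.coe_snd', smul_eq_mul]
  unfold vf
  ring

lemma dy_vf (f : ℝ[X]) (c : ℝ) : dy (vf f c) = vf (C (-c) * f) c := by
  funext z
  unfold dy
  rw [(vf_hasFDerivAt f c z).fderiv]
  simp only [ContinuousLinearMap.add_apply, ContinuousLinearMap.smul_apply,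
    ContinuousLinearMap.coe_fst', ContinuousLinearMap.coe_snd', smul_eq_mul]
  unfold vf
  simp only [eval_mul, eval_C]
  ring

lemma refTriangle_subset :
    refTriangle ⊆ (Set.Icc (0:ℝ) 1) ×ˢ (Set.Ici (0:ℝ)) := by
  rintro z ⟨hx, hy, hsum⟩
  refine ⟨⟨hx, ?_⟩, hy⟩
  linarith

lemma exp_integrableOn_Ici {c : ℝ} (hc : 0 < c) :
    IntegrableOn (fun y : ℝ => Real.exp (-(2 * c) * y)) (Set.Ici (0:ℝ)) :=
  Iff.mpr integrableOn_Ici_iff_integrableOn_Ioi (exp_neg_integrableOn_Ioi 0 (by linarith))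

lemma exp_integral_Ici {c : ℝ} (hc : 0 < c) :
    (∫ y in Set.Ici (0:ℝ), Real.exp (-(2 * c) * y)) = 1 / (2 * c) := by
  rw [MeasureTheory.integral_Ici_eq_integral_Ioi]
  have h2c : (0:ℝ) < 2 * c := by linarith
  have hcomp := MeasureTheory.integral_comp_mul_left_Ioi (fun x : ℝ => Real.exp (-x)) 0 h2c
  simp only [mul_zero] at hcomp
  have heq : (∫ y in Set.Ioi (0:ℝ), Real.exp (-(2 * c) * y))
      = ∫ y in Set.Ioi (0:ℝ), (fun x : ℝ => Real.exp (-x)) (2 * c * y) := by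
    congr 1
    funext y
    simp [neg_mul]
  rw [heq, hcomp, integral_exp_neg_Ioi]
  simp [smul_eq_mul]

lemma J_eq_Icc (h : ℝ[X]) : (∫ x in Set.Icc (0:ℝ) 1, h.eval x) = J h := by
  rw [MeasureTheory.integral_Icc_eq_integral_Ioc]
  unfold J
  rw [intervalIntegral.integral_of_le (by norm_num : (0:ℝ) ≤ 1)]

lemma key2D (h : ℝ[X]) (hpos : ∀ x : ℝ, 0 ≤ h.eval x) {c : ℝ} (hc : 0 < c) :
    ∫ z in refTriangle, (h.eval z.1 * Real.exp (-(2 * c) * z.2))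
      ≤ J h * (1 / (2 * c)) := by
  set A := (Set.Icc (0:ℝ) 1) ×ˢ (Set.Ici (0:ℝ)) with hA
  have hre : volume.restrict A
      = (volume.restrict (Set.Icc (0:ℝ) 1)).prod (volume.restrict (Set.Ici (0:ℝ))) := by
    rw [hA, MeasureTheory.Measure.prod_restrict, ← MeasureTheory.Measure.volume_eq_prod ℝ ℝ]
  have hInt : IntegrableOn (fun z : ℝ × ℝ => h.eval z.1 * Real.exp (-(2 * c) * z.2)) A := by
    rw [MeasureTheory.IntegrableOn, hre]
    exact MeasureTheory.Integrable.mul_prod h.continuous.integrableOn_Icc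
      (exp_integrableOn_Ici hc)
  have hmono : (∫ z in refTriangle, (h.eval z.1 * Real.exp (-(2 * c) * z.2)))
      ≤ ∫ z in A, (h.eval z.1 * Real.exp (-(2 * c) * z.2)) := by
    apply MeasureTheory.setIntegral_mono_set hInt
    · apply Filter.Eventually.of_forall
      intro z
      exact mul_nonneg (hpos z.1) (Real.exp_nonneg _)
    · exact HasSubset.Subset.eventuallyLE refTriangle_subset
  have hprod : (∫ z in A, (h.eval z.1 * Real.exp (-(2 * c) * z.2)))
      = (∫ x in Set.Icc (0:ℝ) 1, h.eval x) * ∫ y in Set.Ici (0:ℝ), Real.exp (-(2 * c) * y) := by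
    rw [hre]
    exact MeasureTheory.integral_prod_mul (fun x => h.eval x) (fun y => Real.exp (-(2 * c) * y))
  rw [hprod, J_eq_Icc h, exp_integral_Ici hc] at hmono
  exact hmono

lemma exp_mul_self (c : ℝ) (y : ℝ) :
    Real.exp (-c * y) * Real.exp (-c * y) = Real.exp (-(2 * c) * y) := by
  rw [← Real.exp_add]
  congr 1
  ring

lemma sq_integrand (f : ℝ[X]) (c : ℝ) (z : ℝ × ℝ) :
    (vf f c z) ^ 2 = (f * f).eval z.1 * Real.exp (-(2 * c) * z.2) := by
  unfold vf
  rw [eval_mul]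
  linear_combination (f.eval z.1) ^ 2 * exp_mul_self c z.2

lemma grad_integrand (f g : ℝ[X]) (c : ℝ) (z : ℝ × ℝ) :
    (vf f c z) ^ 2 + (vf g c z) ^ 2
      = (f * f + g * g).eval z.1 * Real.exp (-(2 * c) * z.2) := by
  unfold vf
  rw [eval_add, eval_mul, eval_mul]
  linear_combination ((f.eval z.1) ^ 2 + (g.eval z.1) ^ 2) * exp_mul_self c z.2

lemma hess_integrand (f g h : ℝ[X]) (c : ℝ) (z : ℝ × ℝ) :
    (vf f c z) ^ 2 + 2 * (vf g c z) ^ 2 + (vf h c z) ^ 2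
      = (f * f + C 2 * (g * g) + h * h).eval z.1 * Real.exp (-(2 * c) * z.2) := by
  unfold vf
  rw [eval_add, eval_add, eval_mul, eval_mul, eval_mul, eval_mul, eval_C]
  linear_combination ((f.eval z.1) ^ 2 + 2 * (g.eval z.1) ^ 2 + (h.eval z.1) ^ 2)
    * exp_mul_self c z.2

lemma sqrt_le_of_le_sq_mul {X A N : ℝ} (hX : X ≤ A ^ 2 * N) (hA : 0 ≤ A) :
    Real.sqrt X ≤ A * Real.sqrt N := by
  calc Real.sqrt X ≤ Real.sqrt (A ^ 2 * N) := Real.sqrt_le_sqrt hX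
    _ = A * Real.sqrt N := by
        rw [Real.sqrt_mul (sq_nonneg A), Real.sqrt_sq hA]

lemma J_mono {f g : ℝ[X]} (h : ∀ x ∈ Set.Icc (0:ℝ) 1, f.eval x ≤ g.eval x) : J f ≤ J g := by
  unfold J
  apply intervalIntegral.integral_mono_on (by norm_num) (intInt f) (intInt g)
  intro x hx
  exact h x hx
end ExtAux

set_option maxHeartbeats 1000000 in
open ExtAux Polynomial in
/-- $hp$-polynomial extension stability result on the reference
triangle (Corollary 3.9 of the paper, obtained by choosing ε = p⁻²). -/
theorem extension_stability_triangle_corollary :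
    ∃ c : ℝ, 0 < c ∧
      ∀ p : ℕ, 1 ≤ p → ∀ q : Polynomial ℝ, q.natDegree ≤ p →
        ∃ v : ℝ × ℝ → ℝ, ContDiff ℝ 2 v ∧
          (∀ x ∈ Set.Icc (0 : ℝ) 1, v (x, 0) = x * (1 - x) * q.eval x) ∧
          Real.sqrt (∫ z in refTriangle, (v z) ^ 2) +
              (p : ℝ) ^ (-2 : ℤ) *
                Real.sqrt (∫ z in refTriangle, ((dx v z) ^ 2 + (dy v z) ^ 2)) +
              (p : ℝ) ^ (-4 : ℤ) *
                Real.sqrt (∫ z in refTriangle,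
                  ((dx (dx v) z) ^ 2 + 2 * (dx (dy v) z) ^ 2 + (dy (dy v) z) ^ 2)) ≤
            c * (p : ℝ) ^ (-1 : ℤ) *
              Real.sqrt (∫ x in Set.Icc (0 : ℝ) 1, (q.eval x) ^ 2) := by
  refine ⟨3891, by norm_num, ?_⟩
  intro p hp q hq
  have hPP1 : (1:ℝ) ≤ (p : ℝ) := by exact_mod_cast hp
  have hPP0 : (0:ℝ) < (p : ℝ) := by linarith
  set PP : ℝ := (p : ℝ) with hPP
  set φ : ℝ[X] := X * (1 - X) * q with hφ
  refine ⟨vf φ (PP ^ 2), vf_contDiff 2 φ (PP ^ 2), ?_, ?_⟩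
  · intro x hx
    unfold vf
    simp [hφ]
  have hφdeg : φ.natDegree ≤ 3 * p := by
    rw [hφ]
    have h1 := natDegree_mul_le (p := (X : ℝ[X]) * (1 - X)) (q := q)
    rw [natDegree_base] at h1
    omega
  have hφ'deg : (derivative φ).natDegree ≤ 3 * p := by
    have := natDegree_derivative_le φ
    omega
  set N0 : ℝ := J (φ * φ) with hN0
  set N1 : ℝ := J (derivative φ * derivative φ) with hN1
  set N2 : ℝ := J (derivative (derivative φ) * derivative (derivative φ)) with hN2
  have hN0p : 0 ≤ N0 := J_sq_nonneg φ
  have hN1p : 0 ≤ N1 := J_sq_nonneg _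
  have hN2p : 0 ≤ N2 := J_sq_nonneg _
  have h3p : ((3 * p : ℕ) : ℝ) = 3 * PP := by push_cast; ring
  have hM1 : N1 ≤ 1944 * PP ^ 4 * N0 := by
    have hmm := markov (3 * p) (by omega) φ hφdeg
    rw [h3p] at hmm
    calc N1 ≤ 24 * (3 * PP) ^ 4 * J (φ * φ) := hmm
      _ = 1944 * PP ^ 4 * N0 := by rw [← hN0]; ring
  have hM2 : N2 ≤ 1944 * PP ^ 4 * N1 := by
    have hmm := markov (3 * p) (by omega) (derivative φ) hφ'deg
    rw [h3p] at hmm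
    calc N2 ≤ 24 * (3 * PP) ^ 4 * J (derivative φ * derivative φ) := hmm
      _ = 1944 * PP ^ 4 * N1 := by rw [← hN1]; ring
  have hN0q : N0 ≤ J (q * q) := by
    apply J_mono
    intro x hx
    obtain ⟨hx0, hx1⟩ := hx
    simp only [hφ, eval_mul, eval_sub, eval_one, eval_X]
    have h01 : (0:ℝ) ≤ x * (1 - x) := mul_nonneg hx0 (by linarith)
    have h14 : x * (1 - x) ≤ 1 := by nlinarith
    have hkey : 0 ≤ (1 - x * (1 - x)) * (1 + x * (1 - x)) * (q.eval x * q.eval x) :=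
      mul_nonneg (mul_nonneg (by linarith) (by linarith)) (mul_self_nonneg _)
    nlinarith [hkey]
  have hC2 : ((C (-(PP ^ 2)) * φ) * (C (-(PP ^ 2)) * φ)) = C ((PP ^ 2) ^ 2) * (φ * φ) := by
    have hc : (C ((PP ^ 2) ^ 2) : ℝ[X]) = C (-(PP ^ 2)) * C (-(PP ^ 2)) := by
      rw [← map_mul]; congr 1; ring
    rw [hc]; ring
  have hC2' : ((C (-(PP ^ 2)) * derivative φ) * (C (-(PP ^ 2)) * derivative φ))
      = C ((PP ^ 2) ^ 2) * (derivative φ * derivative φ) := by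
    have hc : (C ((PP ^ 2) ^ 2) : ℝ[X]) = C (-(PP ^ 2)) * C (-(PP ^ 2)) := by
      rw [← map_mul]; congr 1; ring
    rw [hc]; ring
  have hC4 : ((C (-(PP ^ 2)) * (C (-(PP ^ 2)) * φ)) * (C (-(PP ^ 2)) * (C (-(PP ^ 2)) * φ)))
      = C ((PP ^ 2) ^ 4) * (φ * φ) := by
    have hc : (C ((PP ^ 2) ^ 4) : ℝ[X])
        = C (-(PP ^ 2)) * C (-(PP ^ 2)) * (C (-(PP ^ 2)) * C (-(PP ^ 2))) := by
      simp only [← map_mul]; congr 1; ring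
    rw [hc]; ring
  have hcc0 : (0:ℝ) < PP ^ 2 := by positivity
  -- bound 1
  have hb1 : Real.sqrt (∫ z in refTriangle, (vf φ (PP ^ 2) z) ^ 2)
      ≤ (1 / PP) * Real.sqrt N0 := by
    apply sqrt_le_of_le_sq_mul _ (by positivity)
    have hkey := key2D (φ * φ) (fun x => by rw [eval_mul]; exact mul_self_nonneg _) hcc0
    calc (∫ z in refTriangle, (vf φ (PP ^ 2) z) ^ 2)
        = ∫ z in refTriangle, ((φ * φ).eval z.1 * Real.exp (-(2 * PP ^ 2) * z.2)) := by
          simp only [sq_integrand]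
      _ ≤ J (φ * φ) * (1 / (2 * PP ^ 2)) := hkey
      _ ≤ (1 / PP) ^ 2 * N0 := by
          rw [← hN0, mul_one_div, div_le_iff₀ (by positivity : (0:ℝ) < 2 * PP ^ 2)]
          have heq : (1 / PP) ^ 2 * N0 * (2 * PP ^ 2) = 2 * N0 := by
            field_simp
          rw [heq]
          linarith
  -- bound 2
  have hb2 : Real.sqrt (∫ z in refTriangle,
        ((vf (derivative φ) (PP ^ 2) z) ^ 2 + (vf (C (-(PP ^ 2)) * φ) (PP ^ 2) z) ^ 2))
      ≤ (1945 * PP) * Real.sqrt N0 := by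
    apply sqrt_le_of_le_sq_mul _ (by positivity)
    have hpos : ∀ x : ℝ, 0 ≤ (derivative φ * derivative φ
        + (C (-(PP ^ 2)) * φ) * (C (-(PP ^ 2)) * φ)).eval x := by
      intro x
      simp only [eval_add, eval_mul, eval_C]
      nlinarith [mul_self_nonneg ((derivative φ).eval x),
        mul_self_nonneg (-(PP ^ 2) * φ.eval x)]
    have hkey := key2D _ hpos hcc0
    calc (∫ z in refTriangle,
          ((vf (derivative φ) (PP ^ 2) z) ^ 2 + (vf (C (-(PP ^ 2)) * φ) (PP ^ 2) z) ^ 2))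
        = ∫ z in refTriangle, ((derivative φ * derivative φ
            + (C (-(PP ^ 2)) * φ) * (C (-(PP ^ 2)) * φ)).eval z.1
            * Real.exp (-(2 * PP ^ 2) * z.2)) := by
          simp only [grad_integrand]
      _ ≤ J (derivative φ * derivative φ
            + (C (-(PP ^ 2)) * φ) * (C (-(PP ^ 2)) * φ)) * (1 / (2 * PP ^ 2)) := hkey
      _ = (N1 + (PP ^ 2) ^ 2 * N0) * (1 / (2 * PP ^ 2)) := by
          rw [hC2, J_add, J_C_mul, ← hN0, ← hN1]
      _ ≤ (1945 * PP) ^ 2 * N0 := by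
          rw [mul_one_div, div_le_iff₀ (by positivity : (0:ℝ) < 2 * PP ^ 2)]
          have hP4N0 : (0:ℝ) ≤ PP ^ 4 * N0 := by positivity
          nlinarith [hM1, hP4N0]
  -- bound 3
  have hb3 : Real.sqrt (∫ z in refTriangle,
        ((vf (derivative (derivative φ)) (PP ^ 2) z) ^ 2
          + 2 * (vf (C (-(PP ^ 2)) * derivative φ) (PP ^ 2) z) ^ 2
          + (vf (C (-(PP ^ 2)) * (C (-(PP ^ 2)) * φ)) (PP ^ 2) z) ^ 2))
      ≤ (1945 * PP ^ 3) * Real.sqrt N0 := by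
    apply sqrt_le_of_le_sq_mul _ (by positivity)
    have hpos : ∀ x : ℝ, 0 ≤ (derivative (derivative φ) * derivative (derivative φ)
        + C 2 * ((C (-(PP ^ 2)) * derivative φ) * (C (-(PP ^ 2)) * derivative φ))
        + (C (-(PP ^ 2)) * (C (-(PP ^ 2)) * φ)) * (C (-(PP ^ 2)) * (C (-(PP ^ 2)) * φ))).eval x := by
      intro x
      simp only [eval_add, eval_mul, eval_C]
      nlinarith [mul_self_nonneg ((derivative (derivative φ)).eval x),
        mul_self_nonneg (-(PP ^ 2) * (derivative φ).eval x),
        mul_self_nonneg (-(PP ^ 2) * (-(PP ^ 2) * φ.eval x))]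
    have hkey := key2D _ hpos hcc0
    calc (∫ z in refTriangle,
          ((vf (derivative (derivative φ)) (PP ^ 2) z) ^ 2
            + 2 * (vf (C (-(PP ^ 2)) * derivative φ) (PP ^ 2) z) ^ 2
            + (vf (C (-(PP ^ 2)) * (C (-(PP ^ 2)) * φ)) (PP ^ 2) z) ^ 2))
        = ∫ z in refTriangle, ((derivative (derivative φ) * derivative (derivative φ)
            + C 2 * ((C (-(PP ^ 2)) * derivative φ) * (C (-(PP ^ 2)) * derivative φ))
            + (C (-(PP ^ 2)) * (C (-(PP ^ 2)) * φ)) * (C (-(PP ^ 2)) * (C (-(PP ^ 2)) * φ))).eval z.1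
            * Real.exp (-(2 * PP ^ 2) * z.2)) := by
          simp only [hess_integrand]
      _ ≤ J (derivative (derivative φ) * derivative (derivative φ)
            + C 2 * ((C (-(PP ^ 2)) * derivative φ) * (C (-(PP ^ 2)) * derivative φ))
            + (C (-(PP ^ 2)) * (C (-(PP ^ 2)) * φ)) * (C (-(PP ^ 2)) * (C (-(PP ^ 2)) * φ)))
            * (1 / (2 * PP ^ 2)) := hkey
      _ = (N2 + 2 * ((PP ^ 2) ^ 2 * N1) + (PP ^ 2) ^ 4 * N0) * (1 / (2 * PP ^ 2)) := by
          rw [hC2', hC4, J_add, J_add, J_C_mul, J_C_mul, J_C_mul, ← hN0, ← hN1, ← hN2]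
      _ ≤ (1945 * PP ^ 3) ^ 2 * N0 := by
          rw [mul_one_div, div_le_iff₀ (by positivity : (0:ℝ) < 2 * PP ^ 2)]
          have hP8N0 : (0:ℝ) ≤ PP ^ 8 * N0 := by positivity
          have hP4N1 : (0:ℝ) ≤ PP ^ 4 * N1 := by positivity
          have hM1s : PP ^ 4 * N1 ≤ PP ^ 4 * (1944 * PP ^ 4 * N0) :=
            mul_le_mul_of_nonneg_left hM1 (by positivity)
          nlinarith [hM2, hM1s, hP8N0, hP4N1]
  -- assemble
  have hzp2 : (PP : ℝ) ^ (-2 : ℤ) = 1 / PP ^ 2 := by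
    rw [zpow_neg, one_div]
    norm_cast
  have hzp4 : (PP : ℝ) ^ (-4 : ℤ) = 1 / PP ^ 4 := by
    rw [zpow_neg, one_div]
    norm_cast
  have hzp1 : (PP : ℝ) ^ (-1 : ℤ) = 1 / PP := by
    rw [zpow_neg, one_div]
    norm_cast
    rw [pow_one]
  have hQ : (∫ x in Set.Icc (0 : ℝ) 1, (q.eval x) ^ 2) = J (q * q) := by
    rw [← J_eq_Icc]
    congr 1
    funext x
    rw [eval_mul, sq]
  have hSQ : Real.sqrt N0 ≤ Real.sqrt (J (q * q)) := Real.sqrt_le_sqrt hN0q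
  simp only [dx_vf, dy_vf, derivative_C_mul]
  rw [hzp2, hzp4, hzp1, hQ]
  calc Real.sqrt (∫ z in refTriangle, (vf φ (PP ^ 2) z) ^ 2)
      + 1 / PP ^ 2 * Real.sqrt (∫ z in refTriangle,
          ((vf (derivative φ) (PP ^ 2) z) ^ 2 + (vf (C (-(PP ^ 2)) * φ) (PP ^ 2) z) ^ 2))
      + 1 / PP ^ 4 * Real.sqrt (∫ z in refTriangle,
          ((vf (derivative (derivative φ)) (PP ^ 2) z) ^ 2
            + 2 * (vf (C (-(PP ^ 2)) * derivative φ) (PP ^ 2) z) ^ 2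
            + (vf (C (-(PP ^ 2)) * (C (-(PP ^ 2)) * φ)) (PP ^ 2) z) ^ 2))
      ≤ (1 / PP) * Real.sqrt N0 + 1 / PP ^ 2 * ((1945 * PP) * Real.sqrt N0)
        + 1 / PP ^ 4 * ((1945 * PP ^ 3) * Real.sqrt N0) := by
        refine add_le_add (add_le_add hb1 ?_) ?_
        · exact mul_le_mul_of_nonneg_left hb2 (by positivity)
        · exact mul_le_mul_of_nonneg_left hb3 (by positivity)
    _ = 3891 * (1 / PP) * Real.sqrt N0 := by
        field_simp
        ring
    _ ≤ 3891 * (1 / PP) * Real.sqrt (J (q * q)) := by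
        apply mul_le_mul_of_nonneg_left hSQ (by positivity)
end

section
/- There exists a constant c > 0 such that for every continuously differentiable function v : ℝ² → ℝ, ∫_0^1 (v(x,0)² + v(x,1)² + v(0,y)² + v(1,y)²) ≤ c · ( ∫_S v² + (∫_S v²)^{1/2} · (∫_S ((∂_x v)² + (∂_y v)²))^{1/2} ), where S = [0,1]² (the first integrand is integrated in x for the first two terms and in y for the last two terms). -/
open MeasureTheory

/-- The unit square `S = [0,1]²`. -/
def unitSquare : Set (ℝ × ℝ) := Set.Icc (0 : ℝ) 1 ×ˢ Set.Icc (0 : ℝ) 1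

open Set in
private lemma oneD_aux {g g' : ℝ → ℝ} (hg : ∀ t, HasDerivAt g (g' t) t) (hc : Continuous g')
    (hgc : Continuous g) {a : ℝ} (ha : a ∈ Icc (0:ℝ) 1) :
    g a ≤ (∫ t in Icc (0:ℝ) 1, g t) + ∫ t in Icc (0:ℝ) 1, |g' t| := by
  have habs : IntegrableOn (fun t => |g' t|) (Icc (0:ℝ) 1) := hc.abs.integrableOn_Icc
  have key : ∀ y ∈ Icc (0:ℝ) 1, g a ≤ g y + ∫ t in Icc (0:ℝ) 1, |g' t| := by
    intro y hy
    have hftc : ∫ t in y..a, g' t = g a - g y :=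
      intervalIntegral.integral_eq_sub_of_hasDerivAt (fun t _ => hg t)
        (hc.intervalIntegrable _ _)
    have h1 : |∫ t in y..a, g' t| ≤ ∫ t in Icc (0:ℝ) 1, |g' t| := by
      refine (intervalIntegral.norm_integral_le_integral_norm_uIoc (f := g')).trans ?_
      refine setIntegral_mono_set habs ?_ ?_
      · exact Filter.Eventually.of_forall fun t => abs_nonneg _
      · refine HasSubset.Subset.eventuallyLE ?_
        exact (uIoc_subset_uIcc ..).trans (uIcc_subset_Icc hy ha)
    have := abs_le.1 (hftc ▸ h1)
    linarith [this.2]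
  have hm : (volume (Icc (0:ℝ) 1)).toReal = 1 := by simp
  have h2 : ∫ y in Icc (0:ℝ) 1, g a = g a := by
    rw [setIntegral_const]; simp [hm]
  calc g a = ∫ y in Icc (0:ℝ) 1, g a := h2.symm
    _ ≤ ∫ y in Icc (0:ℝ) 1, (g y + ∫ t in Icc (0:ℝ) 1, |g' t|) := by
        refine setIntegral_mono_on (integrableOn_const (by simp))
          (hgc.integrableOn_Icc.add (integrableOn_const (by simp)))
          measurableSet_Icc key
    _ = (∫ t in Icc (0:ℝ) 1, g t) + ∫ t in Icc (0:ℝ) 1, |g' t| := by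
        rw [integral_add hgc.integrableOn_Icc (integrableOn_const (by simp))]
        simp [hm]

private lemma unitSquare_compact : IsCompact unitSquare := isCompact_Icc.prod isCompact_Icc

private lemma memL2_aux {f : ℝ × ℝ → ℝ} (hf : Continuous f) :
    MemLp f 2 (volume.restrict unitSquare) := by
  haveI : IsFiniteMeasure (volume.restrict unitSquare) :=
    ⟨by rw [Measure.restrict_apply_univ]; exact unitSquare_compact.measure_lt_top⟩
  obtain ⟨C, hC⟩ := unitSquare_compact.exists_bound_of_continuousOn hf.continuousOn
  have htop : MemLp f ⊤ (volume.restrict unitSquare) := by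
    refine memLp_top_of_bound hf.aestronglyMeasurable C ?_
    filter_upwards [ae_restrict_mem unitSquare_compact.measurableSet] with z hz using hC z hz
  exact htop.mono_exponent le_top

private lemma cs_aux {f g : ℝ × ℝ → ℝ} (hf : Continuous f) (hg : Continuous g) :
    ∫ z in unitSquare, |f z * g z| ≤
      Real.sqrt (∫ z in unitSquare, f z ^ 2) * Real.sqrt (∫ z in unitSquare, g z ^ 2) := by
  have hpq : Real.HolderConjugate 2 2 := Real.HolderConjugate.two_two
  have h2 : ENNReal.ofReal (2:ℝ) = 2 := by norm_num
  have h := integral_mul_norm_le_Lp_mul_Lq (μ := volume.restrict unitSquare) hpq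
    (h2 ▸ memL2_aux hf) (h2 ▸ memL2_aux hg)
  have e1 : ∀ x : ℝ × ℝ, ‖f x‖ * ‖g x‖ = |f x * g x| := by
    intro x; rw [abs_mul]; simp [Real.norm_eq_abs]
  have e2 : ∀ x : ℝ, ‖x‖ ^ (2:ℝ) = x ^ 2 := by
    intro x
    rw [show (2:ℝ) = ((2:ℕ):ℝ) by norm_num, Real.rpow_natCast]
    simp [Real.norm_eq_abs, sq_abs]
  simp only [e1, e2] at h
  calc ∫ z in unitSquare, |f z * g z| ≤ _ := h
    _ = _ := by rw [Real.sqrt_eq_rpow, Real.sqrt_eq_rpow]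

/-- the trace inequality -/
theorem trace_inequality_unit_square :
    ∃ c : ℝ, 0 < c ∧
      ∀ v : ℝ × ℝ → ℝ, ContDiff ℝ 1 v →
        (∫ x in Set.Icc (0 : ℝ) 1, ((v (x, 0)) ^ 2 + (v (x, 1)) ^ 2)) +
            (∫ y in Set.Icc (0 : ℝ) 1, ((v (0, y)) ^ 2 + (v (1, y)) ^ 2)) ≤
          c * ((∫ z in unitSquare, (v z) ^ 2) +
            Real.sqrt (∫ z in unitSquare, (v z) ^ 2) *
              Real.sqrt (∫ z in unitSquare, ((dx v z) ^ 2 + (dy v z) ^ 2))) := by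
  refine ⟨8, by norm_num, ?_⟩
  intro v hv
  have hvc : Continuous v := hv.continuous
  have hfd : Continuous (fderiv ℝ v) := hv.continuous_fderiv one_ne_zero
  have hdxc : Continuous (dx v) := hfd.clm_apply continuous_const
  have hdyc : Continuous (dy v) := hfd.clm_apply continuous_const
  have hμ : (volume.restrict (Set.Icc (0:ℝ) 1)).prod (volume.restrict (Set.Icc (0:ℝ) 1)) =
      volume.restrict unitSquare := by
    rw [show unitSquare = Set.Icc (0:ℝ) 1 ×ˢ Set.Icc (0:ℝ) 1 from rfl,
      Measure.prod_restrict, ← Measure.volume_eq_prod]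
  have hint : ∀ f : ℝ × ℝ → ℝ, Continuous f →
      Integrable f ((volume.restrict (Set.Icc (0:ℝ) 1)).prod (volume.restrict (Set.Icc (0:ℝ) 1))) := by
    intro f hf
    rw [hμ]
    exact hf.continuousOn.integrableOn_compact unitSquare_compact
  -- continuity of the key integrands
  have hsqc : Continuous (fun z : ℝ × ℝ => v z ^ 2) := hvc.pow 2
  have habsyc : Continuous (fun z : ℝ × ℝ => |v z * dy v z|) := (hvc.mul hdyc).abs
  have habsxc : Continuous (fun z : ℝ × ℝ => |v z * dx v z|) := (hvc.mul hdxc).abs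
  set A := ∫ z in unitSquare, v z ^ 2 with hA_def
  set B := ∫ z in unitSquare, ((dx v z) ^ 2 + (dy v z) ^ 2) with hB_def
  set C := ∫ z in unitSquare, |v z * dx v z| with hC_def
  set D := ∫ z in unitSquare, |v z * dy v z| with hD_def
  -- Fubini
  have hFub1 : ∀ f : ℝ × ℝ → ℝ, Continuous f →
      ∫ z in unitSquare, f z = ∫ x in Set.Icc (0:ℝ) 1, ∫ y in Set.Icc (0:ℝ) 1, f (x, y) := by
    intro f hf
    rw [← hμ]
    exact integral_prod f (hint f hf)
  have hFub2 : ∀ f : ℝ × ℝ → ℝ, Continuous f →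
      ∫ z in unitSquare, f z = ∫ y in Set.Icc (0:ℝ) 1, ∫ x in Set.Icc (0:ℝ) 1, f (x, y) := by
    intro f hf
    rw [← hμ]
    exact integral_prod_symm f (hint f hf)
  -- the x-direction edges (y = 0, y = 1)
  have key1 : ∀ x : ℝ, v (x, 0) ^ 2 + v (x, 1) ^ 2 ≤
      2 * (∫ y in Set.Icc (0:ℝ) 1, v (x, y) ^ 2) +
      4 * (∫ y in Set.Icc (0:ℝ) 1, |v (x, y) * dy v (x, y)|) := by
    intro x
    have hcoord : Continuous (fun t : ℝ => ((x, t) : ℝ × ℝ)) :=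
      continuous_const.prodMk continuous_id
    have hg : ∀ t, HasDerivAt (fun s : ℝ => v (x, s) ^ 2)
        (2 * (v (x, t) * dy v (x, t))) t := by
      intro t
      have h1 : HasFDerivAt v (fderiv ℝ v (x, t)) (x, t) :=
        (hv.differentiable one_ne_zero (x, t)).hasFDerivAt
      have h2 : HasDerivAt (fun s : ℝ => ((x, s) : ℝ × ℝ)) (0, 1) t :=
        (hasDerivAt_const t x).prodMk (hasDerivAt_id t)
      have h3 : HasDerivAt (fun s : ℝ => v (x, s)) (dy v (x, t)) t :=
        h1.comp_hasDerivAt t h2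
      have : HasDerivAt (fun s : ℝ => v (x, s) ^ 2) _ t := h3.pow 2
      convert this using 1
      push_cast
      ring
    have hgc : Continuous (fun s : ℝ => v (x, s) ^ 2) := (hvc.comp hcoord).pow 2
    have hg'c : Continuous (fun t : ℝ => 2 * (v (x, t) * dy v (x, t))) :=
      continuous_const.mul ((hvc.comp hcoord).mul (hdyc.comp hcoord))
    have h0 := oneD_aux hg hg'c hgc (a := 0) (by norm_num)
    have h1 := oneD_aux hg hg'c hgc (a := 1) (by norm_num)
    have habs : (∫ t in Set.Icc (0:ℝ) 1, |2 * (v (x, t) * dy v (x, t))|) =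
        2 * ∫ t in Set.Icc (0:ℝ) 1, |v (x, t) * dy v (x, t)| := by
      simp_rw [abs_mul, abs_two]
      rw [integral_const_mul]
    rw [habs] at h0 h1
    linarith
  -- the y-direction edges (x = 0, x = 1)
  have key2 : ∀ y : ℝ, v (0, y) ^ 2 + v (1, y) ^ 2 ≤
      2 * (∫ x in Set.Icc (0:ℝ) 1, v (x, y) ^ 2) +
      4 * (∫ x in Set.Icc (0:ℝ) 1, |v (x, y) * dx v (x, y)|) := by
    intro y
    have hcoord : Continuous (fun t : ℝ => ((t, y) : ℝ × ℝ)) :=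
      continuous_id.prodMk continuous_const
    have hg : ∀ t, HasDerivAt (fun s : ℝ => v (s, y) ^ 2)
        (2 * (v (t, y) * dx v (t, y))) t := by
      intro t
      have h1 : HasFDerivAt v (fderiv ℝ v (t, y)) (t, y) :=
        (hv.differentiable one_ne_zero (t, y)).hasFDerivAt
      have h2 : HasDerivAt (fun s : ℝ => ((s, y) : ℝ × ℝ)) (1, 0) t :=
        (hasDerivAt_id t).prodMk (hasDerivAt_const t y)
      have h3 : HasDerivAt (fun s : ℝ => v (s, y)) (dx v (t, y)) t :=
        h1.comp_hasDerivAt t h2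
      have : HasDerivAt (fun s : ℝ => v (s, y) ^ 2) _ t := h3.pow 2
      convert this using 1
      push_cast
      ring
    have hgc : Continuous (fun s : ℝ => v (s, y) ^ 2) := (hvc.comp hcoord).pow 2
    have hg'c : Continuous (fun t : ℝ => 2 * (v (t, y) * dx v (t, y))) :=
      continuous_const.mul ((hvc.comp hcoord).mul (hdxc.comp hcoord))
    have h0 := oneD_aux hg hg'c hgc (a := 0) (by norm_num)
    have h1 := oneD_aux hg hg'c hgc (a := 1) (by norm_num)
    have habs : (∫ t in Set.Icc (0:ℝ) 1, |2 * (v (t, y) * dx v (t, y))|) =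
        2 * ∫ t in Set.Icc (0:ℝ) 1, |v (t, y) * dx v (t, y)| := by
      simp_rw [abs_mul, abs_two]
      rw [integral_const_mul]
    rw [habs] at h0 h1
    linarith
  -- integrate the x-direction edge bound
  have lineX : (∫ x in Set.Icc (0:ℝ) 1, (v (x, 0) ^ 2 + v (x, 1) ^ 2)) ≤ 2 * A + 4 * D := by
    have hL : IntegrableOn (fun x : ℝ => v (x, 0) ^ 2 + v (x, 1) ^ 2) (Set.Icc (0:ℝ) 1) :=
      (((hvc.comp (continuous_id.prodMk continuous_const)).pow 2).add
        ((hvc.comp (continuous_id.prodMk continuous_const)).pow 2)).integrableOn_Icc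
    have hR1 : Integrable (fun x : ℝ => ∫ y in Set.Icc (0:ℝ) 1, v (x, y) ^ 2)
        (volume.restrict (Set.Icc (0:ℝ) 1)) :=
      (hint _ hsqc).integral_prod_left
    have hR2 : Integrable (fun x : ℝ => ∫ y in Set.Icc (0:ℝ) 1, |v (x, y) * dy v (x, y)|)
        (volume.restrict (Set.Icc (0:ℝ) 1)) :=
      (hint _ habsyc).integral_prod_left
    calc (∫ x in Set.Icc (0:ℝ) 1, (v (x, 0) ^ 2 + v (x, 1) ^ 2))
        ≤ ∫ x in Set.Icc (0:ℝ) 1, (2 * (∫ y in Set.Icc (0:ℝ) 1, v (x, y) ^ 2) +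
            4 * (∫ y in Set.Icc (0:ℝ) 1, |v (x, y) * dy v (x, y)|)) :=
          integral_mono hL ((hR1.const_mul 2).add (hR2.const_mul 4)) (fun x => key1 x)
      _ = 2 * (∫ x in Set.Icc (0:ℝ) 1, ∫ y in Set.Icc (0:ℝ) 1, v (x, y) ^ 2) +
          4 * (∫ x in Set.Icc (0:ℝ) 1, ∫ y in Set.Icc (0:ℝ) 1, |v (x, y) * dy v (x, y)|) := by
          rw [integral_add (hR1.const_mul 2) (hR2.const_mul 4), integral_const_mul,
            integral_const_mul]
      _ = 2 * A + 4 * D := by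
          rw [hA_def, hD_def, hFub1 _ hsqc, hFub1 _ habsyc]
  -- integrate the y-direction edge bound
  have lineY : (∫ y in Set.Icc (0:ℝ) 1, (v (0, y) ^ 2 + v (1, y) ^ 2)) ≤ 2 * A + 4 * C := by
    have hL : IntegrableOn (fun y : ℝ => v (0, y) ^ 2 + v (1, y) ^ 2) (Set.Icc (0:ℝ) 1) :=
      (((hvc.comp (continuous_const.prodMk continuous_id)).pow 2).add
        ((hvc.comp (continuous_const.prodMk continuous_id)).pow 2)).integrableOn_Icc
    have hR1 : Integrable (fun y : ℝ => ∫ x in Set.Icc (0:ℝ) 1, v (x, y) ^ 2)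
        (volume.restrict (Set.Icc (0:ℝ) 1)) :=
      (hint _ hsqc).integral_prod_right
    have hR2 : Integrable (fun y : ℝ => ∫ x in Set.Icc (0:ℝ) 1, |v (x, y) * dx v (x, y)|)
        (volume.restrict (Set.Icc (0:ℝ) 1)) :=
      (hint _ habsxc).integral_prod_right
    calc (∫ y in Set.Icc (0:ℝ) 1, (v (0, y) ^ 2 + v (1, y) ^ 2))
        ≤ ∫ y in Set.Icc (0:ℝ) 1, (2 * (∫ x in Set.Icc (0:ℝ) 1, v (x, y) ^ 2) +
            4 * (∫ x in Set.Icc (0:ℝ) 1, |v (x, y) * dx v (x, y)|)) :=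
          integral_mono hL ((hR1.const_mul 2).add (hR2.const_mul 4)) (fun y => key2 y)
      _ = 2 * (∫ y in Set.Icc (0:ℝ) 1, ∫ x in Set.Icc (0:ℝ) 1, v (x, y) ^ 2) +
          4 * (∫ y in Set.Icc (0:ℝ) 1, ∫ x in Set.Icc (0:ℝ) 1, |v (x, y) * dx v (x, y)|) := by
          rw [integral_add (hR1.const_mul 2) (hR2.const_mul 4), integral_const_mul,
            integral_const_mul]
      _ = 2 * A + 4 * C := by
          rw [hA_def, hC_def, hFub2 _ hsqc, hFub2 _ habsxc]
  -- Cauchy-Schwarz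
  have hBx : (∫ z in unitSquare, (dx v z) ^ 2) ≤ B := by
    rw [hB_def]
    refine integral_mono ((hdxc.pow 2).continuousOn.integrableOn_compact unitSquare_compact)
      (((hdxc.pow 2).add (hdyc.pow 2)).continuousOn.integrableOn_compact unitSquare_compact)
      (fun z => by nlinarith [sq_nonneg (dy v z)])
  have hBy : (∫ z in unitSquare, (dy v z) ^ 2) ≤ B := by
    rw [hB_def]
    refine integral_mono ((hdyc.pow 2).continuousOn.integrableOn_compact unitSquare_compact)
      (((hdxc.pow 2).add (hdyc.pow 2)).continuousOn.integrableOn_compact unitSquare_compact)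
      (fun z => by nlinarith [sq_nonneg (dx v z)])
  have hsqrtA : (0:ℝ) ≤ Real.sqrt A := Real.sqrt_nonneg _
  have hCS1 : C ≤ Real.sqrt A * Real.sqrt B := by
    calc C ≤ Real.sqrt A * Real.sqrt (∫ z in unitSquare, (dx v z) ^ 2) := cs_aux hvc hdxc
      _ ≤ Real.sqrt A * Real.sqrt B := by
          exact mul_le_mul_of_nonneg_left (Real.sqrt_le_sqrt hBx) hsqrtA
  have hCS2 : D ≤ Real.sqrt A * Real.sqrt B := by
    calc D ≤ Real.sqrt A * Real.sqrt (∫ z in unitSquare, (dy v z) ^ 2) := cs_aux hvc hdyc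
      _ ≤ Real.sqrt A * Real.sqrt B := by
          exact mul_le_mul_of_nonneg_left (Real.sqrt_le_sqrt hBy) hsqrtA
  have hA0 : (0:ℝ) ≤ A :=
    setIntegral_nonneg unitSquare_compact.measurableSet (fun z _ => sq_nonneg _)
  linarith
end
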